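/- Let F be a field of characteristic 2, d a positive integer, and W a subspace of F^d. Then there exists a vector x in the orthogonal complement of W with ⟨x,x⟩ ≠ 0 if and only if the all-one vector does not lie in W. -/
import Mathlib


/-- Let F be a field of characteristic 2, d a positive integer, and W a
subspace of F^d. Then there exists a vector x in the orthogonal complement of W with
⟨x,x⟩ ≠ 0 iff the all-one vector does not lie in W. -/
theorem stmt_0 (F : Type*) [Field F] [CharP F 2] (d : ℕ) (hd : 1 ≤ d)
    (W : Submodule F (Fin d → F)) :
    (∃ x : Fin d → F, (∀ y ∈ W, ∑ t, x t * y t = 0) ∧ ∑ t, x t * x t ≠ 0) ↔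
      (fun _ : Fin d => (1 : F)) ∉ W := by
  have key : ∀ x : Fin d → F, ∑ t, x t * x t = (∑ t, x t) * (∑ t, x t) := by
    intro x
    rw [CharTwo.sum_mul_self]
  constructor
  · rintro ⟨x, hx, hxx⟩ h1
    apply hxx
    have := hx _ h1
    simp only [mul_one] at this
    rw [key, this, mul_zero]
  · intro h1
    obtain ⟨f, hf1, hf2⟩ := W.exists_dual_map_eq_bot_of_notMem h1 inferInstance
    refine ⟨fun t => f (Pi.single t 1), ?_, ?_⟩
    · intro y hy
      have hfy : f y = 0 := by
        have : f y ∈ W.map f := Submodule.mem_map_of_mem hy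
        rw [hf2] at this
        simpa using this
      calc ∑ t, f (Pi.single t 1) * y t = f y := by
            conv_rhs => rw [← Finset.univ_sum_single y, map_sum]
            refine Finset.sum_congr rfl fun t _ => ?_
            have : Pi.single t (y t) = y t • (Pi.single t (1:F) : Fin d → F) := by
              rw [← Pi.single_smul, smul_eq_mul, mul_one]
            rw [this, map_smul, smul_eq_mul, mul_comm]
          _ = 0 := hfy
    · rw [key]
      have : ∑ t, f (Pi.single t 1) = f (fun _ => 1) := by
        have : (fun _ : Fin d => (1:F)) = ∑ t, Pi.single t (1:F) := by
          rw [Finset.univ_sum_single (fun _ : Fin d => (1:F))]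
        rw [this, map_sum]
      rw [this]
      exact mul_ne_zero hf1 hf1
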